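/- arXiv:1709.10146 — 2 statements merged into one kernel-verified Lean document; each statement's English description precedes it below -/
import Mathlib

section
/- For any finite sequence of positive reals x_1 ≤ x_2 ≤ ... ≤ x_c and any minimum-cost strategy lower bound, if a sequence (y_j) is defined greedily by y_j = min{ y : Σ_{i : φ_i ≤ y} w_i > y_1 + ... + y_{j-1} } (with values y_j taken from a finite set of potentials φ_0 < φ_1 < ... < φ_m and weights w_i ≥ 0), and the x-sequence satisfies Σ_{i : φ_i < x_j} w_i ≤ x_1 + ... + x_{j-1} for every j, then y_j ≥ x_j for every index j for which y_j is defined. -/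
/-- Lemma `y-min`: given weights `w_0,…,w_m ≥ 0` and strictly increasing potentials
`φ_0 < … < φ_m`, if a nondecreasing sequence `x_1 ≤ … ≤ x_c` with `x_1 = φ_0`
satisfies the covering constraints, and `y_1, y_2, …` is the greedy sequence
(`y_j` is the least potential whose accumulated weight exceeds `y_1+⋯+y_{j-1}`)
with `d` the least index such that `y_1+⋯+y_d ≥ w_0+⋯+w_m`, then `d ≤ c` and
`y_j ≥ x_j` for every `j ≤ d`. -/
theorem stmt1 (m c d : ℕ) (w φp x y : ℕ → ℝ)
    (hc : 1 ≤ c) (hd : 1 ≤ d)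
    (hw : ∀ i ≤ m, 0 ≤ w i)
    (hφ : ∀ i, i < m → φp i < φp (i + 1))
    (hx1 : x 1 = φp 0)
    (hxmono : ∀ j, 1 ≤ j → j < c → x j ≤ x (j + 1))
    -- covering constraint for j = 1, …, c
    (hcov : ∀ j, 1 ≤ j → j ≤ c →
      ∑ i ∈ (Finset.range (m + 1)).filter (fun i => φp i < x j), w i
        ≤ ∑ j' ∈ Finset.Ico 1 j, x j')
    -- covering constraint for j = c + 1 (with x_{c+1} = +∞)
    (hcovtop : ∑ i ∈ Finset.range (m + 1), w i ≤ ∑ j' ∈ Finset.Ico 1 (c + 1), x j')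
    -- y j is a potential
    (hymem : ∀ j, 1 ≤ j → j ≤ d → ∃ i ≤ m, y j = φp i)
    -- y j violates the constraint given y_1, …, y_{j-1}
    (hyviol : ∀ j, 1 ≤ j → j ≤ d →
      ∑ i ∈ (Finset.range (m + 1)).filter (fun i => φp i ≤ y j), w i
        > ∑ j' ∈ Finset.Ico 1 j, y j')
    -- y j is the least such potential
    (hymin : ∀ j, 1 ≤ j → j ≤ d → ∀ i ≤ m,
      (∑ i' ∈ (Finset.range (m + 1)).filter (fun i' => φp i' ≤ φp i), w i'
        > ∑ j' ∈ Finset.Ico 1 j, y j') → y j ≤ φp i)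
    -- d is the least index with y_1 + ⋯ + y_d ≥ w_0 + ⋯ + w_m
    (hdge : ∑ j' ∈ Finset.Ico 1 (d + 1), y j' ≥ ∑ i ∈ Finset.range (m + 1), w i)
    (hdmin : ∀ d', d' < d → ∑ j' ∈ Finset.Ico 1 (d' + 1), y j' < ∑ i ∈ Finset.range (m + 1), w i) :
    d ≤ c ∧ ∀ j, 1 ≤ j → j ≤ d → x j ≤ y j := by
  have key : ∀ j, 1 ≤ j → j ≤ d → j ≤ c → x j ≤ y j := by
    intro j
    induction j using Nat.strong_induction_on with
    | _ j ih =>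
      intro h1 hjd hjc
      have hsum : ∑ j' ∈ Finset.Ico 1 j, x j' ≤ ∑ j' ∈ Finset.Ico 1 j, y j' := by
        apply Finset.sum_le_sum
        intro k hk
        simp only [Finset.mem_Ico] at hk
        exact ih k hk.2 hk.1 (by omega) (by omega)
      by_contra hlt
      push_neg at hlt
      have hsub : (Finset.range (m+1)).filter (fun i => φp i ≤ y j) ⊆
          (Finset.range (m+1)).filter (fun i => φp i < x j) := by
        intro i hi
        simp only [Finset.mem_filter] at hi ⊢
        exact ⟨hi.1, lt_of_le_of_lt hi.2 hlt⟩
      have hmono := Finset.sum_le_sum_of_subset_of_nonneg hsub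
        (fun i hi _ => hw i (by
          simp only [Finset.mem_filter, Finset.mem_range] at hi; omega))
      have h1' := hcov j h1 hjc
      have h2 := hyviol j h1 hjd
      linarith
  have hdc : d ≤ c := by
    by_contra hdc
    push_neg at hdc
    have hsum : ∑ j' ∈ Finset.Ico 1 (c+1), x j' ≤ ∑ j' ∈ Finset.Ico 1 (c+1), y j' := by
      apply Finset.sum_le_sum
      intro k hk
      simp only [Finset.mem_Ico] at hk
      exact key k hk.1 (by omega) (by omega)
    have := hdmin c hdc
    linarith
  exact ⟨hdc, fun j h1 hjd => key j h1 hjd (hjd.trans hdc)⟩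
end

section
/- Given real numbers satisfying: D_flat ≤ 4P + P·D_deep/φ, D_deep ≤ 10·O_deep − 16·φ, and O_flat ≥ (P/φ)·O_deep, with P ≥ 0, φ > 0, O_deep ≥ 0, then D_deep + D_flat ≤ 10·O_deep + 10·O_flat − 12P − 16φ. -/
theorem stmt3 (P φ Odeep Oflat Ddeep Dflat : ℝ)
    (hP : 0 ≤ P) (hφ : 0 < φ) (hOdeep : 0 ≤ Odeep)
    (h1 : Dflat ≤ 4 * P + P * Ddeep / φ)
    (h2 : Ddeep ≤ 10 * Odeep - 16 * φ)
    (h3 : Oflat ≥ (P / φ) * Odeep) :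
    Ddeep + Dflat ≤ 10 * Odeep + 10 * Oflat - 12 * P - 16 * φ := by
  have hφ' : φ ≠ 0 := ne_of_gt hφ
  have key : P * Ddeep / φ ≤ 10 * Oflat - 16 * P := by
    rw [div_le_iff₀ hφ]
    have h3' : P * Odeep ≤ Oflat * φ := by
      rw [ge_iff_le, div_mul_eq_mul_div, div_le_iff₀ hφ] at h3
      linarith
    nlinarith [mul_le_mul_of_nonneg_left h2 hP]
  linarith
end
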